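/- Every proper graded ideal of a G-graded ring R is a graded weakly total prime ideal if and only if for all homogeneous elements a, b ∈ h(R), the two-sided ideal ⟨ab⟩ generated by ab satisfies ⟨ab⟩ = ⟨a⟩, ⟨ab⟩ = ⟨b⟩, or ⟨ab⟩ = 0. -/

import Mathlib

set_option linter.unusedSectionVars false



/-- The additive subgroup generated by all products `a * b` with `a ∈ S`, `b ∈ T`.
For two-sided ideals `I`, `J`, `mulClosure I J` is the ideal product `IJ`. -/
def mulClosure {R : Type*} [NonUnitalRing R] (S T : Set R) : AddSubgroup R :=
  AddSubgroup.closure {x | ∃ a ∈ S, ∃ b ∈ T, a * b = x}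

/-- A two-sided ideal of a `G`-graded ring is graded if every homogeneous component of
every element of the ideal lies in the ideal. -/
def IsGradedIdeal {G R : Type*} [DecidableEq G] [NonUnitalRing R]
    (𝒜 : G → AddSubgroup R) [DirectSum.Decomposition 𝒜] (P : TwoSidedIdeal R) : Prop :=
  ∀ x ∈ P, ∀ g : G, (DirectSum.decompose 𝒜 x g : R) ∈ P

/-- A proper graded ideal `P` is graded weakly total prime if `0 ≠ xy ∈ P` implies
`x ∈ P` or `y ∈ P` for homogeneous `x`, `y`. -/
def IsGradedWeaklyTotalPrime {G R : Type*} [DecidableEq G] [NonUnitalRing R]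
    (𝒜 : G → AddSubgroup R) [DirectSum.Decomposition 𝒜] (P : TwoSidedIdeal R) : Prop :=
  P ≠ ⊤ ∧ IsGradedIdeal 𝒜 P ∧
    ∀ x y : R, SetLike.IsHomogeneousElem 𝒜 x → SetLike.IsHomogeneousElem 𝒜 y →
      x * y ≠ 0 → x * y ∈ P → x ∈ P ∨ y ∈ P

/-- A proper graded ideal `P` is graded total prime if `xy ∈ P` implies `x ∈ P` or
`y ∈ P` for homogeneous `x`, `y`. -/
def IsGradedTotalPrime {G R : Type*} [DecidableEq G] [NonUnitalRing R]
    (𝒜 : G → AddSubgroup R) [DirectSum.Decomposition 𝒜] (P : TwoSidedIdeal R) : Prop :=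
  P ≠ ⊤ ∧ IsGradedIdeal 𝒜 P ∧
    ∀ x y : R, SetLike.IsHomogeneousElem 𝒜 x → SetLike.IsHomogeneousElem 𝒜 y →
      x * y ∈ P → x ∈ P ∨ y ∈ P

section Aux
variable {G R : Type*} [Group G] [DecidableEq G] [NonUnitalRing R]
    (𝒜 : G → AddSubgroup R) [DirectSum.Decomposition 𝒜]

lemma homog_decompose_mem (P : TwoSidedIdeal R) {w : R} (hw : SetLike.IsHomogeneousElem 𝒜 w)
    (hwP : w ∈ P) (g : G) : (DirectSum.decompose 𝒜 w g : R) ∈ P := by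
  obtain ⟨i, hi⟩ := hw
  rcases eq_or_ne i g with rfl | hne
  · rwa [DirectSum.decompose_of_mem_same 𝒜 hi]
  · rw [DirectSum.decompose_of_mem_ne 𝒜 hi hne]; exact P.zero_mem

lemma sum_decompose_mem (P : TwoSidedIdeal R) {ι : Type*} (s : Finset ι) (f : ι → R)
    (hf : ∀ i ∈ s, ∀ g : G, (DirectSum.decompose 𝒜 (f i) g : R) ∈ P) (g : G) :
    (DirectSum.decompose 𝒜 (∑ i ∈ s, f i) g : R) ∈ P := by
  classical
  induction s using Finset.induction with
  | empty => simp
  | insert _ _ ha ih =>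
    rw [Finset.sum_insert ha]
    simp only [DirectSum.decompose_add, DirectSum.add_apply, AddSubgroup.coe_add]
    exact P.add_mem (hf _ (Finset.mem_insert_self _ _) g)
      (ih fun i hi => hf i (Finset.mem_insert_of_mem hi))

variable (hmul : ∀ ⦃g h : G⦄ ⦃a b : R⦄, a ∈ 𝒜 g → b ∈ 𝒜 h → a * b ∈ 𝒜 (g * h))

include hmul in
lemma span_homog_graded {x : R} (hx : SetLike.IsHomogeneousElem 𝒜 x) :
    ∀ y ∈ TwoSidedIdeal.span {x}, ∀ g : G,
      (DirectSum.decompose 𝒜 y g : R) ∈ TwoSidedIdeal.span {x} := by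
  classical
  set P := TwoSidedIdeal.span ({x} : Set R) with hP
  set Q : TwoSidedIdeal R := TwoSidedIdeal.mk'
    {y | ∀ g : G, (DirectSum.decompose 𝒜 y g : R) ∈ P}
    (fun g => by simp)
    (fun {a b} ha hb g => by
      simp only [DirectSum.decompose_add, DirectSum.add_apply, AddSubgroup.coe_add]
      exact P.add_mem (ha g) (hb g))
    (fun {a} ha g => by
      simp only [DirectSum.decompose_neg, DFinsupp.neg_apply, AddSubgroup.coe_neg]
      exact P.neg_mem (ha g))
    (fun {r y} hy g => by
      rw [show r * y = ∑ k ∈ (DirectSum.decompose 𝒜 r).support,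
          ∑ h ∈ (DirectSum.decompose 𝒜 y).support,
          ((DirectSum.decompose 𝒜 r k : R) * (DirectSum.decompose 𝒜 y h : R)) from by
        rw [← Finset.sum_mul_sum, DirectSum.sum_support_decompose,
          DirectSum.sum_support_decompose]]
      refine sum_decompose_mem 𝒜 P _ _ (fun k hk g' => ?_) g
      refine sum_decompose_mem 𝒜 P _ _ (fun h hh g'' => ?_) g'
      exact homog_decompose_mem 𝒜 P
        ⟨k * h, hmul (SetLike.coe_mem _) (SetLike.coe_mem _)⟩
        (P.mul_mem_left _ _ (hy h)) g'')
    (fun {y r} hy g => by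
      rw [show y * r = ∑ k ∈ (DirectSum.decompose 𝒜 y).support,
          ∑ h ∈ (DirectSum.decompose 𝒜 r).support,
          ((DirectSum.decompose 𝒜 y k : R) * (DirectSum.decompose 𝒜 r h : R)) from by
        rw [← Finset.sum_mul_sum, DirectSum.sum_support_decompose,
          DirectSum.sum_support_decompose]]
      refine sum_decompose_mem 𝒜 P _ _ (fun k hk g' => ?_) g
      refine sum_decompose_mem 𝒜 P _ _ (fun h hh g'' => ?_) g'
      exact homog_decompose_mem 𝒜 P
        ⟨k * h, hmul (SetLike.coe_mem _) (SetLike.coe_mem _)⟩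
        (P.mul_mem_right _ _ (hy k)) g'') with hQ
  intro y hy g
  have hxQ : x ∈ Q := by
    rw [hQ, TwoSidedIdeal.mem_mk']
    exact fun g => homog_decompose_mem 𝒜 P hx (TwoSidedIdeal.subset_span rfl) g
  have := TwoSidedIdeal.mem_span_iff.mp hy Q (Set.singleton_subset_iff.mpr hxQ)
  rw [hQ, TwoSidedIdeal.mem_mk'] at this
  exact this g
end Aux

/-- Every proper graded ideal of `R` is graded weakly total prime iff for all homogeneous
`a, b ∈ h(R)`, `⟨ab⟩ = ⟨a⟩`, `⟨ab⟩ = ⟨b⟩`, or `⟨ab⟩ = 0`. -/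
theorem stmt_19 {G R : Type*} [Group G] [DecidableEq G] [NonUnitalRing R]
    (𝒜 : G → AddSubgroup R) [DirectSum.Decomposition 𝒜]
    (hmul : ∀ ⦃g h : G⦄ ⦃a b : R⦄, a ∈ 𝒜 g → b ∈ 𝒜 h → a * b ∈ 𝒜 (g * h)) :
    (∀ P : TwoSidedIdeal R, P ≠ ⊤ → IsGradedIdeal 𝒜 P → IsGradedWeaklyTotalPrime 𝒜 P) ↔
      ∀ a b : R, SetLike.IsHomogeneousElem 𝒜 a → SetLike.IsHomogeneousElem 𝒜 b →
        (TwoSidedIdeal.span {a * b} = TwoSidedIdeal.span {a} ∨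
         TwoSidedIdeal.span {a * b} = TwoSidedIdeal.span {b} ∨
         TwoSidedIdeal.span ({a * b} : Set R) = ⊥) := by
  constructor
  · intro H a b ha hb
    have hsub_a : TwoSidedIdeal.span {a * b} ≤ TwoSidedIdeal.span {a} := fun y hy =>
      TwoSidedIdeal.mem_span_iff.mp hy _ (Set.singleton_subset_iff.mpr <|
        (TwoSidedIdeal.span {a}).mul_mem_right _ _ (TwoSidedIdeal.subset_span rfl))
    have hsub_b : TwoSidedIdeal.span {a * b} ≤ TwoSidedIdeal.span {b} := fun y hy =>
      TwoSidedIdeal.mem_span_iff.mp hy _ (Set.singleton_subset_iff.mpr <|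
        (TwoSidedIdeal.span {b}).mul_mem_left _ _ (TwoSidedIdeal.subset_span rfl))
    by_cases htop : TwoSidedIdeal.span ({a * b} : Set R) = ⊤
    · left
      exact le_antisymm hsub_a (htop ▸ le_top)
    by_cases hab : a * b = 0
    · right; right
      rw [hab]
      refine le_antisymm (fun y hy => ?_) bot_le
      exact TwoSidedIdeal.mem_span_iff.mp hy ⊥ (by simp)
    · obtain ⟨ga, hga⟩ := id ha; obtain ⟨gb, hgb⟩ := id hb
      have habh : SetLike.IsHomogeneousElem 𝒜 (a * b) := ⟨ga * gb, hmul hga hgb⟩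
      have hgr : IsGradedIdeal 𝒜 (TwoSidedIdeal.span {a * b}) :=
        span_homog_graded 𝒜 hmul habh
      obtain ⟨-, -, hwtp⟩ := H _ htop hgr
      rcases hwtp a b ha hb hab (TwoSidedIdeal.subset_span rfl) with haP | hbP
      · left
        exact le_antisymm hsub_a (fun y hy =>
          TwoSidedIdeal.mem_span_iff.mp hy _ (Set.singleton_subset_iff.mpr haP))
      · right; left
        exact le_antisymm hsub_b (fun y hy =>
          TwoSidedIdeal.mem_span_iff.mp hy _ (Set.singleton_subset_iff.mpr hbP))
  · intro H P hne hgr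
    refine ⟨hne, hgr, fun x y hx hy hxy0 hxyP => ?_⟩
    rcases H x y hx hy with h | h | h
    · left
      have : x ∈ TwoSidedIdeal.span ({x * y} : Set R) := h ▸ TwoSidedIdeal.subset_span rfl
      exact TwoSidedIdeal.mem_span_iff.mp this P (Set.singleton_subset_iff.mpr hxyP)
    · right
      have : y ∈ TwoSidedIdeal.span ({x * y} : Set R) := h ▸ TwoSidedIdeal.subset_span rfl
      exact TwoSidedIdeal.mem_span_iff.mp this P (Set.singleton_subset_iff.mpr hxyP)
    · have hb : x * y ∈ (⊥ : TwoSidedIdeal R) := h ▸ TwoSidedIdeal.subset_span rfl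
      exact absurd (by simpa using hb) hxy0
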